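/- Positions of grafting decompose: for σ : Tree (i, c) and grafting data φ, ψ, the positions of γ σ φ ψ are equivalent to the disjoint union of the positions of σ and Σ (p : Pos M c), Pos (Slice M) (ψ p), and this equivalence commutes with the typing functions. -/

import Mathlib

/-- A cartesian polynomial monad: an indexed container equipped with unit `eta`,
multiplication `mu`, position pairing/projections witnessing the cartesian
equivalences `Pos (eta i) ≃ Unit` and `Pos (mu c δ) ≃ Σ p, Pos (δ p)`,
compatible typing rules, and the monad laws. -/
structure PM where
  Idx : Type
  Cns : Idx → Type
  Pos : {i : Idx} → Cns i → Type
  Typ : {i : Idx} → (c : Cns i) → Pos c → Idx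
  eta : (i : Idx) → Cns i
  mu : {i : Idx} → (c : Cns i) → ((p : Pos c) → Cns (Typ c p)) → Cns i
  etaPos : (i : Idx) → Pos (eta i)
  etaTyp : ∀ (i : Idx) (p : Pos (eta i)), Typ (eta i) p = i
  etaPosUnique : ∀ (i : Idx) (p : Pos (eta i)), p = etaPos i
  muPos : ∀ {i : Idx} (c : Cns i) (δ : (p : Pos c) → Cns (Typ c p))
    (p : Pos c), Pos (δ p) → Pos (mu c δ)
  muFst : ∀ {i : Idx} (c : Cns i) (δ : (p : Pos c) → Cns (Typ c p)),
    Pos (mu c δ) → Pos c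
  muSnd : ∀ {i : Idx} (c : Cns i) (δ : (p : Pos c) → Cns (Typ c p))
    (p : Pos (mu c δ)), Pos (δ (muFst c δ p))
  muTyp : ∀ {i : Idx} (c : Cns i) (δ : (p : Pos c) → Cns (Typ c p))
    (p : Pos (mu c δ)), Typ (mu c δ) p = Typ (δ (muFst c δ p)) (muSnd c δ p)
  muFstBeta : ∀ {i : Idx} (c : Cns i) (δ : (p : Pos c) → Cns (Typ c p))
    (p : Pos c) (q : Pos (δ p)), muFst c δ (muPos c δ p q) = p
  muSndBeta : ∀ {i : Idx} (c : Cns i) (δ : (p : Pos c) → Cns (Typ c p))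
    (p : Pos c) (q : Pos (δ p)), HEq (muSnd c δ (muPos c δ p q)) q
  muPosEta : ∀ {i : Idx} (c : Cns i) (δ : (p : Pos c) → Cns (Typ c p))
    (p : Pos (mu c δ)), muPos c δ (muFst c δ p) (muSnd c δ p) = p
  unitR : ∀ {i : Idx} (c : Cns i), mu c (fun p => eta (Typ c p)) = c
  unitL : ∀ (i : Idx) (δ : (p : Pos (eta i)) → Cns (Typ (eta i) p)),
    HEq (mu (eta i) δ) (δ (etaPos i))
  assoc : ∀ {i : Idx} (c : Cns i) (δ : (p : Pos c) → Cns (Typ c p))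
    (ε : (p : Pos (mu c δ)) → Cns (Typ (mu c δ) p))
    (h : ∀ (p : Pos c) (q : Pos (δ p)), Typ (mu c δ) (muPos c δ p q) = Typ (δ p) q),
    mu (mu c δ) ε =
      mu c (fun p => mu (δ p) (fun q => cast (congrArg Cns (h p q)) (ε (muPos c δ p q))))

/-- The typing of a paired position of a multiplication. -/
theorem PM.muPosTyp (M : PM) {i : M.Idx} (c : M.Cns i)
    (δ : (p : M.Pos c) → M.Cns (M.Typ c p)) (p : M.Pos c) (q : M.Pos (δ p)) :
    M.Typ (M.mu c δ) (M.muPos c δ p q) = M.Typ (δ p) q := by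
  have h1 := M.muTyp c δ (M.muPos c δ p q)
  have h2 := M.muFstBeta c δ p q
  have h3 := M.muSndBeta c δ p q
  rw [h1]
  congr 1
  · rw [h2]
  · rw [h2]

/-- Transporting a constructor along an equality of indices, as an equality of pairs. -/
theorem PM.castSigma (M : PM) {i j : M.Idx} (h : i = j) (c : M.Cns i) :
    (⟨i, c⟩ : Σ k : M.Idx, M.Cns k) = ⟨j, cast (congrArg M.Cns h) c⟩ := by
  subst h; rfl

/-- Constructors of the slice monad `Slice M`: trees generated by the
constructors of `M`, indexed by their iterated multiplication. -/
inductive STree (M : PM) : (Σ i : M.Idx, M.Cns i) → Type where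
  | lf : (i : M.Idx) → STree M ⟨i, M.eta i⟩
  | nd : {i : M.Idx} → (c : M.Cns i) → (δ : (p : M.Pos c) → M.Cns (M.Typ c p)) →
      (ε : (p : M.Pos c) → STree M ⟨M.Typ c p, δ p⟩) → STree M ⟨i, M.mu c δ⟩

/-- Positions (internal nodes) of a tree: a leaf has no positions, a node has
its root (`here`) together with a position of the base constructor and,
recursively, a node of the tree attached there (`there`).  (This inductive
family is equivalent to `Pos (lf i) = Empty`,
`Pos (nd c δ ε) = Unit ⊕ Σ p, Pos (ε p)`.) -/
inductive TreePos (M : PM) : ∀ {ic : Σ i : M.Idx, M.Cns i}, STree M ic → Type where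
  | here : {i : M.Idx} → {c : M.Cns i} → {δ : (p : M.Pos c) → M.Cns (M.Typ c p)} →
      {ε : (p : M.Pos c) → STree M ⟨M.Typ c p, δ p⟩} → TreePos M (STree.nd c δ ε)
  | there : {i : M.Idx} → {c : M.Cns i} → {δ : (p : M.Pos c) → M.Cns (M.Typ c p)} →
      {ε : (p : M.Pos c) → STree M ⟨M.Typ c p, δ p⟩} →
      (p : M.Pos c) → TreePos M (ε p) → TreePos M (STree.nd c δ ε)

/-- Typing of the slice monad: project the constructor occurring at a node. -/
def TreeTyp (M : PM) : ∀ {ic : Σ i : M.Idx, M.Cns i} {σ : STree M ic},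
    TreePos M σ → Σ i : M.Idx, M.Cns i
  | _, _, .here (i := i) (c := c) => ⟨i, c⟩
  | _, _, .there p q => TreeTyp M q

/-- The corolla on a constructor `c`: a single node with all leaves. -/
def corolla (M : PM) {i : M.Idx} (c : M.Cns i) :
    STree M ⟨i, M.mu c (fun p => M.eta (M.Typ c p))⟩ :=
  STree.nd c (fun p => M.eta (M.Typ c p)) (fun p => STree.lf (M.Typ c p))

/-- The unit of the slice monad: the corolla, transported along right unitality. -/
def sliceEta (M : PM) (ic : Σ i : M.Idx, M.Cns i) : STree M ic :=
  cast (congrArg (STree M) (congrArg (Sigma.mk ic.1) (M.unitR ic.2))) (corolla M ic.2)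

/-- The grafting operation on trees, characterized by its recursion equations. -/
structure Graft (M : PM) where
  γ : ∀ {i : M.Idx} (c : M.Cns i), STree M ⟨i, c⟩ →
    ∀ (φ : (p : M.Pos c) → M.Cns (M.Typ c p)),
      ((p : M.Pos c) → STree M ⟨M.Typ c p, φ p⟩) → STree M ⟨i, M.mu c φ⟩
  lf_rule : ∀ (i : M.Idx) (φ : (p : M.Pos (M.eta i)) → M.Cns (M.Typ (M.eta i) p))
    (ψ : (p : M.Pos (M.eta i)) → STree M ⟨M.Typ (M.eta i) p, φ p⟩),
    HEq (γ (M.eta i) (STree.lf i) φ ψ) (ψ (M.etaPos i))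
  nd_rule : ∀ {i : M.Idx} (c : M.Cns i) (δ : (p : M.Pos c) → M.Cns (M.Typ c p))
    (ε : (p : M.Pos c) → STree M ⟨M.Typ c p, δ p⟩)
    (φ : (p : M.Pos (M.mu c δ)) → M.Cns (M.Typ (M.mu c δ) p))
    (ψ : (p : M.Pos (M.mu c δ)) → STree M ⟨M.Typ (M.mu c δ) p, φ p⟩),
    HEq (γ (M.mu c δ) (STree.nd c δ ε) φ ψ)
      (STree.nd c
        (fun p => M.mu (δ p)
          (fun q => cast (congrArg M.Cns (M.muPosTyp c δ p q)) (φ (M.muPos c δ p q))))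
        (fun p => γ (δ p) (ε p)
          (fun q => cast (congrArg M.Cns (M.muPosTyp c δ p q)) (φ (M.muPos c δ p q)))
          (fun q => cast (congrArg (STree M)
              (M.castSigma (M.muPosTyp c δ p q) (φ (M.muPos c δ p q))))
            (ψ (M.muPos c δ p q)))))

/-- The multiplication (substitution) of the slice monad, characterized by its
recursion equations, together with a grafting operation. -/
structure SliceOps (M : PM) extends Graft M where
  smu : ∀ {ic : Σ i : M.Idx, M.Cns i} (σ : STree M ic),
    ((p : TreePos M σ) → STree M (TreeTyp M p)) → STree M ic
  smu_lf : ∀ (i : M.Idx)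
    (φ : (p : TreePos M (STree.lf (M := M) i)) → STree M (TreeTyp M p)),
    smu (STree.lf i) φ = STree.lf i
  smu_nd : ∀ {i : M.Idx} (c : M.Cns i) (δ : (p : M.Pos c) → M.Cns (M.Typ c p))
    (ε : (p : M.Pos c) → STree M ⟨M.Typ c p, δ p⟩)
    (φ : (p : TreePos M (STree.nd c δ ε)) → STree M (TreeTyp M p)),
    smu (STree.nd c δ ε) φ =
      γ c (φ TreePos.here) δ
        (fun p => smu (ε p) (fun q => φ (TreePos.there p q)))

/-- Trees that are heterogeneously equal over equal indices have equivalent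
position sets, compatibly with typing. -/
theorem heq_pos (M : PM) {ic jd : Σ i : M.Idx, M.Cns i} (h : ic = jd)
    {σ : STree M ic} {τ : STree M jd} (hστ : HEq σ τ) :
    ∃ e : TreePos M σ ≃ TreePos M τ, ∀ p, TreeTyp M p = TreeTyp M (e p) := by
  subst h; cases hστ; exact ⟨Equiv.refl _, fun _ => rfl⟩

/-- The cartesian position equivalence for a multiplication. -/
def posEquiv (M : PM) {i : M.Idx} (c : M.Cns i)
    (δ : (p : M.Pos c) → M.Cns (M.Typ c p)) :
    M.Pos (M.mu c δ) ≃ Σ p : M.Pos c, M.Pos (δ p) where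
  toFun r := ⟨M.muFst c δ r, M.muSnd c δ r⟩
  invFun x := M.muPos c δ x.1 x.2
  left_inv r := M.muPosEta c δ r
  right_inv x := by
    obtain ⟨p, q⟩ := x
    exact Sigma.ext (M.muFstBeta c δ p q) (M.muSndBeta c δ p q)

/-- The canonical description of the positions of a tree by cases. -/
def TreePosCases (M : PM) : ∀ {ic : Σ i : M.Idx, M.Cns i}, STree M ic → Type
  | _, .lf _ => Empty
  | _, .nd _ _ ε => PUnit ⊕ Σ p, TreePos M (ε p)

/-- Sending a position to its case description. -/
def toSplit (M : PM) : ∀ {ic : Σ i : M.Idx, M.Cns i} {σ : STree M ic},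
    TreePos M σ → TreePosCases M σ
  | _, _, .here => .inl PUnit.unit
  | _, _, .there p q => .inr ⟨p, q⟩

/-- Recovering a position from its case description. -/
def ofSplit (M : PM) : ∀ {ic : Σ i : M.Idx, M.Cns i} (σ : STree M ic),
    TreePosCases M σ → TreePos M σ
  | _, .lf _, x => x.elim
  | _, .nd _ _ _, x => match x with
    | Sum.inl _ => .here
    | Sum.inr ⟨p, q⟩ => .there p q

theorem ofSplit_toSplit (M : PM) : ∀ {ic : Σ i : M.Idx, M.Cns i} {σ : STree M ic}
    (r : TreePos M σ), ofSplit M σ (toSplit M r) = r := by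
  intro ic σ r
  cases r <;> rfl

theorem toSplit_ofSplit (M : PM) : ∀ {ic : Σ i : M.Idx, M.Cns i} (σ : STree M ic)
    (x : TreePosCases M σ), toSplit M (ofSplit M σ x) = x := by
  intro ic σ x
  cases σ with
  | lf i => exact x.elim
  | nd c δ ε => rcases x with _ | ⟨p, q⟩ <;> rfl

/-- Positions of a node split as the root plus positions of the subtrees. -/
def ndSplit (M : PM) {i : M.Idx} (c : M.Cns i)
    (δ : (p : M.Pos c) → M.Cns (M.Typ c p))
    (ε : (p : M.Pos c) → STree M ⟨M.Typ c p, δ p⟩) :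
    TreePos M (STree.nd c δ ε) ≃ (PUnit ⊕ Σ p : M.Pos c, TreePos M (ε p)) where
  toFun := toSplit M
  invFun := ofSplit M (STree.nd c δ ε)
  left_inv := ofSplit_toSplit M
  right_inv := toSplit_ofSplit M (STree.nd c δ ε)

/-- Positions of a grafting decompose: the positions of `γ σ φ ψ` are
equivalent to the disjoint union of the positions of `σ` and the positions of
the grafted trees `ψ p`, and this equivalence commutes with the typing
functions. -/
theorem grafting_positions (M : PM) (G : Graft M) :
    ∀ {i : M.Idx} (c : M.Cns i) (σ : STree M ⟨i, c⟩)
      (φ : (p : M.Pos c) → M.Cns (M.Typ c p))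
      (ψ : (p : M.Pos c) → STree M ⟨M.Typ c p, φ p⟩),
      ∃ e : TreePos M (G.γ c σ φ ψ) ≃ (TreePos M σ ⊕ Σ p : M.Pos c, TreePos M (ψ p)),
        ∀ r : TreePos M (G.γ c σ φ ψ),
          TreeTyp M r =
            Sum.elim (fun s => TreeTyp M s) (fun ps => TreeTyp M ps.2) (e r) := by
  suffices H : ∀ (ic : Σ i : M.Idx, M.Cns i) (σ : STree M ic)
      (φ : (p : M.Pos ic.2) → M.Cns (M.Typ ic.2 p))
      (ψ : (p : M.Pos ic.2) → STree M ⟨M.Typ ic.2 p, φ p⟩),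
      ∃ e : TreePos M (G.γ ic.2 σ φ ψ) ≃ (TreePos M σ ⊕ Σ p : M.Pos ic.2, TreePos M (ψ p)),
        ∀ r, TreeTyp M r =
          Sum.elim (fun s => TreeTyp M s) (fun ps => TreeTyp M ps.2) (e r) by
    intro i c σ φ ψ
    exact H ⟨i, c⟩ σ φ ψ
  intro ic σ
  induction σ with
  | lf i =>
    intro φ ψ
    obtain ⟨e₀, he₀⟩ := heq_pos M
      (Sigma.ext (M.etaTyp i (M.etaPos i)).symm (M.unitL i φ))
      (G.lf_rule i φ ψ)
    refine ⟨e₀.trans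
      { toFun := fun t => .inr ⟨M.etaPos i, t⟩
        invFun := fun x => match x with
          | .inl s => (toSplit M s).elim
          | .inr ⟨p, t⟩ => M.etaPosUnique i p ▸ t
        left_inv := fun t => rfl
        right_inv := fun x => by
          rcases x with s | ⟨p, t⟩
          · exact (toSplit M s).elim
          · obtain rfl := (M.etaPosUnique i p).symm
            rfl }, ?_⟩
    intro r
    exact he₀ r
  | nd c δ ε IH =>
    rename_i i
    intro φ ψ
    obtain ⟨e₀, he₀⟩ := heq_pos M
      (congrArg (Sigma.mk i) (M.assoc c δ φ (M.muPosTyp c δ)))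
      (G.nd_rule c δ ε φ ψ)
    choose eIH heIH using fun p => IH p
      (fun q => cast (congrArg M.Cns (M.muPosTyp c δ p q)) (φ (M.muPos c δ p q)))
      (fun q => cast (congrArg (STree M)
        (M.castSigma (M.muPosTyp c δ p q) (φ (M.muPos c δ p q))))
        (ψ (M.muPos c δ p q)))
    have he2 : ∀ p q, ∃ e : TreePos M (cast (congrArg (STree M)
        (M.castSigma (M.muPosTyp c δ p q) (φ (M.muPos c δ p q))))
        (ψ (M.muPos c δ p q))) ≃ TreePos M (ψ (M.muPos c δ p q)),
        ∀ t, TreeTyp M t = TreeTyp M (e t) := by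
      intro p q
      obtain ⟨e, he⟩ := heq_pos M
        (M.castSigma (M.muPosTyp c δ p q) (φ (M.muPos c δ p q)))
        (cast_heq (congrArg (STree M)
          (M.castSigma (M.muPosTyp c δ p q) (φ (M.muPos c δ p q))))
          (ψ (M.muPos c δ p q))).symm
      exact ⟨e.symm, fun t => by
        have h := he (e.symm t); rw [Equiv.apply_symm_apply] at h; exact h.symm⟩
    choose e2 he2' using fun p q => he2 p q
    refine ⟨e₀.trans ((ndSplit M c _ _).trans
      ((Equiv.sumCongr (Equiv.refl PUnit)
          ((Equiv.sigmaCongrRight (fun p => (eIH p).trans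
              (Equiv.sumCongr (Equiv.refl _)
                (Equiv.sigmaCongrRight (fun q => e2 p q))))).trans
            ((Equiv.sigmaSumDistrib _ _).trans
              (Equiv.sumCongr (Equiv.refl _)
                ((Equiv.sigmaAssoc (fun p q => TreePos M (ψ (M.muPos c δ p q)))).symm.trans
                  (Equiv.sigmaCongrLeft (β := fun p' => TreePos M (ψ p'))
                    (posEquiv M c δ).symm)))))).trans
        ((Equiv.sumAssoc _ _ _).symm.trans
          (Equiv.sumCongr (ndSplit M c δ ε).symm (Equiv.refl _))))), ?_⟩
    intro r
    rw [he₀ r]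
    simp only [Equiv.trans_apply]
    generalize e₀ r = r'
    obtain ⟨x, rfl⟩ : ∃ x, ofSplit M _ x = r' := ⟨toSplit M r', ofSplit_toSplit M r'⟩
    rw [show (ndSplit M c _ _) (ofSplit M _ x) = x from toSplit_ofSplit M _ x]
    rcases x with u | ⟨p, q⟩
    case inl => rfl
    case inr =>
      rcases h : eIH p q with s | ⟨q', t⟩ <;>
        · have hq := heIH p q
          rw [h] at hq
          simp only [ndSplit, toSplit, Equiv.coe_fn_mk, Equiv.sumCongr_apply,
            Sum.map_inr, Sum.map_inl, Equiv.trans_apply, Equiv.sigmaCongrRight_apply,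
            h, Equiv.sigmaSumDistrib, Equiv.coe_fn_symm_mk, Equiv.sumAssoc,
            Equiv.sigmaAssoc, Equiv.sigmaCongrLeft_apply, Sum.elim_inl, Sum.elim_inr,
            ofSplit, Equiv.refl_apply]
          first
            | exact hq
            | exact hq.trans (he2' p q' t)
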